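/- Let b > 0 and let 0 < T₀ < T₁ < b. Let x₁ be the unique solution in (0,1) of b·x = T₁·artanh(x). Then there exists a₀ > 0 such that for every a > a₀ the number p := tanh( a/(T₁ − T₀) ) satisfies x₁ < p < 1, and there exists a unique q* ∈ ℝ such that q* + b·p = T₀·artanh(p) and a + q* + b·p = T₁·artanh(p). (Thus for a sufficiently large jump a of the magnetic field, the mean-field equilibrium equations at temperatures T₀ and T₁ share a common stable solution p at the field value q*, corresponding to a Reeb chord joining the initial and terminal equilibrium Legendrians.) -/
import Mathlib


/-- The inverse hyperbolic tangent on `(−1,1)`: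
`artanh x = (1/2)·log((1+x)/(1−x))`. -/
noncomputable def artanh (x : ℝ) : ℝ := (1 / 2) * Real.log ((1 + x) / (1 - x))

lemma tanh_eq' (t : ℝ) :
    Real.tanh t = (Real.exp (2*t) - 1) / (Real.exp (2*t) + 1) := by
  rw [Real.tanh_eq_sinh_div_cosh, Real.sinh_eq, Real.cosh_eq]
  have h1 : Real.exp t > 0 := Real.exp_pos t
  have h2 : Real.exp (-t) > 0 := Real.exp_pos (-t)
  have h3 : Real.exp (2*t) = Real.exp t * Real.exp t := by
    rw [← Real.exp_add]; ring_nf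
  have h4 : Real.exp t * Real.exp (-t) = 1 := by
    rw [← Real.exp_add]; simp
  rw [div_div_div_cancel_right₀ (by norm_num : (2:ℝ) ≠ 0)]
  rw [div_eq_div_iff (by positivity) (by positivity)]
  nlinarith [h3, h4]

lemma tanh_mem (t : ℝ) : Real.tanh t ∈ Set.Ioo (-1 : ℝ) 1 := by
  rw [tanh_eq']
  have h : (0:ℝ) < Real.exp (2*t) := Real.exp_pos _
  constructor
  · rw [lt_div_iff₀ (by linarith)]; linarith
  · rw [div_lt_one (by linarith)]; linarith

lemma artanh_tanh' (t : ℝ) : artanh (Real.tanh t) = t := by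
  rw [tanh_eq', artanh]
  have h : (0:ℝ) < Real.exp (2*t) := Real.exp_pos _
  have key : (1 + (Real.exp (2*t) - 1) / (Real.exp (2*t) + 1)) /
      (1 - (Real.exp (2*t) - 1) / (Real.exp (2*t) + 1)) = Real.exp (2*t) := by
    rw [div_eq_iff]
    · field_simp
      ring
    · intro hc
      rw [sub_eq_zero, eq_comm, div_eq_one_iff_eq (by linarith)] at hc
      linarith
  rw [key, Real.log_exp]; ring

lemma artanh_strictMono : StrictMonoOn artanh (Set.Ioo (-1 : ℝ) 1) := by
  intro x hx y hy hxy
  have hx1 : (0:ℝ) < 1 - x := by linarith [hx.2]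
  have hy1 : (0:ℝ) < 1 - y := by linarith [hy.2]
  have hx0 : (0:ℝ) < 1 + x := by linarith [hx.1]
  have hy0 : (0:ℝ) < 1 + y := by linarith [hy.1]
  unfold artanh
  have hlt : (1 + x) / (1 - x) < (1 + y) / (1 - y) := by
    rw [div_lt_div_iff₀ hx1 hy1]; nlinarith
  have := Real.log_lt_log (by positivity) hlt
  linarith

/-- For `0 < T₀ < T₁ < b` and a sufficiently large jump `a` of
the magnetic field, the magnetization `p = tanh(a/(T₁−T₀))` is stable for
temperature `T₁` (i.e. `x₁ < p < 1`, where `x₁` is the unique solution in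
`(0,1)` of `b·x = T₁·artanh x`), and there is a unique field value `q*` at
which the mean-field equilibrium equations at temperatures `T₀` (field `q*`)
and `T₁` (field `q* + a`) are simultaneously satisfied by `p` — a Reeb chord
joining the initial and terminal equilibrium Legendrians. -/
theorem reeb_chord_existence
    (b T₀ T₁ : ℝ) (hb : 0 < b) (hT₀ : 0 < T₀) (hT : T₀ < T₁) (hT₁ : T₁ < b)
    (x₁ : ℝ) (hx₁ : x₁ ∈ Set.Ioo (0 : ℝ) 1) (hx₁eq : b * x₁ = T₁ * artanh x₁)
    (hx₁uniq : ∀ x ∈ Set.Ioo (0 : ℝ) 1, b * x = T₁ * artanh x → x = x₁) :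
    ∃ a₀ > 0, ∀ a > a₀,
      (x₁ < Real.tanh (a / (T₁ - T₀)) ∧ Real.tanh (a / (T₁ - T₀)) < 1) ∧
      ∃! qstar : ℝ,
        qstar + b * Real.tanh (a / (T₁ - T₀))
            = T₀ * artanh (Real.tanh (a / (T₁ - T₀))) ∧
        a + qstar + b * Real.tanh (a / (T₁ - T₀))
            = T₁ * artanh (Real.tanh (a / (T₁ - T₀))) := by
  have hc : (0:ℝ) < T₁ - T₀ := by linarith
  have hx₁' : x₁ ∈ Set.Ioo (-1 : ℝ) 1 := ⟨by linarith [hx₁.1], hx₁.2⟩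
  have hart_pos : 0 < artanh x₁ := by
    have : artanh 0 < artanh x₁ :=
      artanh_strictMono (by constructor <;> norm_num) hx₁' hx₁.1
    simpa [artanh] using this
  refine ⟨(T₁ - T₀) * artanh x₁, by positivity, fun a ha => ?_⟩
  set t := a / (T₁ - T₀) with ht
  have htgt : artanh x₁ < t := by
    rw [ht, lt_div_iff₀ hc]; linarith [ha]
  set p := Real.tanh t with hp
  have hpm : p ∈ Set.Ioo (-1 : ℝ) 1 := tanh_mem t
  have hartp : artanh p = t := artanh_tanh' t
  have hx₁p : x₁ < p := by
    by_contra h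
    push_neg at h
    rcases eq_or_lt_of_le h with h | h
    · rw [h] at hartp; linarith
    · have := artanh_strictMono hpm hx₁' h
      rw [hartp] at this; linarith
  refine ⟨⟨hx₁p, hpm.2⟩, T₀ * artanh p - b * p, ⟨by ring, ?_⟩, fun q hq => by linarith [hq.1]⟩
  rw [hartp]
  have : a = (T₁ - T₀) * t := by rw [ht]; field_simp
  linarith [this]
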